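/- Let K be a connected subset of a finite graph with uniform edge length δ. If u is infinity harmonic in K (Δ∞u = 0 on K), then u satisfies comparison with cones on K: for every x₀ ∈ ∂K, λ ≥ 0, α ∈ ℝ, if u ≤ α + λ·d_K(x₀,·) on ∂K then u ≤ α + λ·d_K(x₀,·) on K, and symmetrically for the lower cone bound. -/

import Mathlib

open Filter Topology
open scoped Classical

noncomputable section

variable {V : Type*}

/-- A path from `x` to `y` whose interior vertices `l` all lie in `K`. -/
def pathIn (adj : V → V → Prop) (K : Set V) (x y : V) (l : List V) : Prop :=
  List.Chain adj x (l ++ [y]) ∧ ∀ z ∈ l, z ∈ K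

/-- The restricted path metric `d_K` (edge length `δ`), via paths with interior in `K`. -/
def dK (adj : V → V → Prop) (K : Set V) (δ : ℝ) (x y : V) : ℝ :=
  if x = y then 0
  else sInf {r : ℝ | ∃ l : List V, pathIn adj K x y l ∧ r = δ * (l.length + 1)}

/-- The boundary of a vertex set `K`. -/
def bdry (adj : V → V → Prop) (K : Set V) : Set V :=
  {y | y ∉ K ∧ ∃ x ∈ K, adj x y}

/-- The graph infinity Laplacian. -/
def lapInf (adj : V → V → Prop) (u : V → ℝ) (x : V) : ℝ :=
  sSup ((fun y => u y - u x) '' {y | adj x y}) +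
    sInf ((fun y => u y - u x) '' {y | adj x y})

/-- The local Lipschitz constant `F(u,x)` at a vertex `x`. -/
def locLip (adj : V → V → Prop) (δ : ℝ) (u : V → ℝ) (x : V) : ℝ :=
  sSup ((fun y => |u x - u y| / δ) '' {y | adj x y})

/-- The Lipschitz constant of `u` over the set `A`, measured in the metric `d_K`. -/
def LipOn (adj : V → V → Prop) (K A : Set V) (δ : ℝ) (u : V → ℝ) : ℝ :=
  sSup {r : ℝ | ∃ x ∈ A, ∃ y ∈ A, x ≠ y ∧ r = |u x - u y| / dK adj K δ x y}

/-- `K` is connected: any two points of `K ∪ ∂K` are joined by a path through `K`. -/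
def connectedIn (adj : V → V → Prop) (K : Set V) : Prop :=
  ∀ x ∈ K ∪ bdry adj K, ∀ y ∈ K ∪ bdry adj K, x ≠ y → ∃ l, pathIn adj K x y l

section lemmas
variable {adj : V → V → Prop} {K : Set V} {δ : ℝ} {x y x₀ : V}

lemma PS_pos (hδ : 0 < δ) {r : ℝ}
    (hr : r ∈ {r : ℝ | ∃ l : List V, pathIn adj K x y l ∧ r = δ * (l.length + 1)}) : δ ≤ r := by
  obtain ⟨l, -, rfl⟩ := hr
  nlinarith [(l.length.cast_nonneg : (0:ℝ) ≤ l.length)]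

lemma dK_eq (hxy : x ≠ y) :
    dK adj K δ x y = sInf {r : ℝ | ∃ l : List V, pathIn adj K x y l ∧ r = δ * (l.length + 1)} := by
  simp [dK, hxy]

lemma dK_nonneg (hδ : 0 < δ) : 0 ≤ dK adj K δ x y := by
  by_cases hxy : x = y
  · simp [dK, hxy]
  · rw [dK_eq hxy]
    exact Real.sInf_nonneg fun r hr => le_trans hδ.le (PS_pos hδ hr)

lemma dK_self : dK adj K δ x x = 0 := by simp [dK]

lemma dK_le (hδ : 0 < δ) (hxy : x ≠ y) {l : List V} (hl : pathIn adj K x y l) :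
    dK adj K δ x y ≤ δ * (l.length + 1) := by
  rw [dK_eq hxy]
  exact csInf_le ⟨δ, fun r hr => PS_pos hδ hr⟩ ⟨l, hl, rfl⟩

lemma dK_min (hδ : 0 < δ) (hxy : x ≠ y) (hex : ∃ l, pathIn adj K x y l) :
    ∃ l, pathIn adj K x y l ∧ dK adj K δ x y = δ * (l.length + 1) ∧
      ∀ l', pathIn adj K x y l' → l.length ≤ l'.length := by
  set N : Set ℕ := {n | ∃ l, pathIn adj K x y l ∧ l.length = n} with hN
  have hNne : N.Nonempty := by obtain ⟨l, hl⟩ := hex; exact ⟨l.length, l, hl, rfl⟩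
  obtain ⟨l, hl, hlen⟩ := Nat.sInf_mem hNne
  refine ⟨l, hl, le_antisymm (dK_le hδ hxy hl) ?_, fun l' hl' => ?_⟩
  · rw [dK_eq hxy]
    refine le_csInf ⟨_, l, hl, rfl⟩ ?_
    rintro r ⟨l', hl', rfl⟩
    have : sInf N ≤ l'.length := Nat.sInf_le ⟨l', hl', rfl⟩
    have : (l.length : ℝ) ≤ l'.length := by exact_mod_cast hlen ▸ this
    nlinarith
  · have : sInf N ≤ l'.length := Nat.sInf_le ⟨l', hl', rfl⟩
    omega

lemma dK_step (hδ : 0 < δ) (hx : x ∈ K) (hxx0 : x₀ ≠ x)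
    (hex : ∃ l, pathIn adj K x₀ x l) (ha : adj x y) :
    dK adj K δ x₀ y ≤ dK adj K δ x₀ x + δ := by
  by_cases hy : x₀ = y
  · subst hy
    rw [dK_self]
    linarith [dK_nonneg (adj := adj) (K := K) (x := x₀) (y := x) hδ]
  · obtain ⟨l, hl, hd, -⟩ := dK_min hδ hxx0 hex
    have hpath : pathIn adj K x₀ y (l ++ [x]) := by
      constructor
      · have : l ++ [x] ++ [y] = l ++ x :: [y] := by simp
        rw [this]
        show List.IsChain adj (x₀ :: (l ++ x :: [y]))
        rw [List.isChain_cons_split]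
        exact ⟨hl.1, List.isChain_pair.2 ha⟩
      · intro z hz
        rcases List.mem_append.1 hz with h | h
        · exact hl.2 z h
        · simp at h; subst h; exact hx
    have := dK_le hδ hy hpath
    simp only [List.length_append, List.length_singleton] at this
    push_cast at this
    rw [hd]
    -- push_cast
    linarith

lemma dK_pred (hδ : 0 < δ) (hx : x ∈ K) (hxx0 : x₀ ≠ x)
    (hex : ∃ l, pathIn adj K x₀ x l) :
    ∃ z, adj z x ∧ (z = x₀ ∨ z ∈ K) ∧ dK adj K δ x₀ z ≤ dK adj K δ x₀ x - δ := by
  obtain ⟨l, hl, hd, -⟩ := dK_min hδ hxx0 hex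
  rcases l.eq_nil_or_concat with rfl | ⟨l', z, hlz⟩
  · refine ⟨x₀, ?_, Or.inl rfl, ?_⟩
    · have := hl.1
      simpa [List.Chain] using this
    · rw [dK_self, hd]; simp
  · rw [List.concat_eq_append] at hlz
    subst hlz
    have hchain : List.Chain adj x₀ (l' ++ z :: [x]) := by
      have : l' ++ [z] ++ [x] = l' ++ z :: [x] := by simp
      rw [← this]; exact hl.1
    change List.IsChain adj (x₀ :: (l' ++ z :: [x])) at hchain
    rw [List.isChain_cons_split] at hchain
    have hzx : adj z x := List.isChain_pair.1 hchain.2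
    have hzK : z ∈ K := hl.2 z (by simp)
    refine ⟨z, hzx, Or.inr hzK, ?_⟩
    by_cases hz0 : x₀ = z
    · subst hz0
      rw [dK_self, hd]
      simp only [List.length_append, List.length_singleton]
      push_cast
      nlinarith
    · have hpz : pathIn adj K x₀ z l' :=
        ⟨hchain.1, fun w hw => hl.2 w (List.mem_append.2 (Or.inl hw))⟩
      have := dK_le hδ hz0 hpz
      rw [hd]
      simp only [List.length_append, List.length_singleton]
      push_cast
      linarith


lemma lapInf_neg (adj : V → V → Prop) (u : V → ℝ) (x : V) :
    lapInf adj (fun y => -u y) x = -lapInf adj u x := by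
  unfold lapInf
  have h : (fun y => (fun y => -u y) y - (fun y => -u y) x) '' {y | adj x y}
      = -((fun y => u y - u x) '' {y | adj x y}) := by
    rw [← Set.image_neg_eq_neg, ← Set.image_comp]
    apply Set.image_congr
    intro a _
    simp [Function.comp]
    ring
  rw [h]
  have h1 : sSup (-((fun y => u y - u x) '' {y | adj x y}))
      = -sInf ((fun y => u y - u x) '' {y | adj x y}) := by
    rw [Real.sInf_def, neg_neg]
  have h2 : sInf (-((fun y => u y - u x) '' {y | adj x y}))
      = -sSup ((fun y => u y - u x) '' {y | adj x y}) := by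
    rw [Real.sInf_def, neg_neg]
  rw [h1, h2]; ring

lemma upper [Fintype V] (adj : V → V → Prop) (hsymm : ∀ x y, adj x y → adj y x)
    (δ : ℝ) (hδ : 0 < δ) (K : Set V) (hconn : connectedIn adj K)
    (u : V → ℝ) (hu : ∀ x ∈ K, lapInf adj u x = 0)
    (x₀ : V) (hx₀ : x₀ ∈ bdry adj K) (lam : ℝ) (hlam : 0 < lam) (α : ℝ)
    (hb : ∀ y ∈ bdry adj K, u y ≤ α + lam * dK adj K δ x₀ y) :
    ∀ x ∈ K, u x ≤ α + lam * dK adj K δ x₀ x := by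
  classical
  set d : V → ℝ := fun x => dK adj K δ x₀ x with hdd
  set w : V → ℝ := fun x => u x - α - lam * d x with hw
  set T : Set V := K ∪ bdry adj K with hT
  have hTfin : T.Finite := Set.toFinite T
  obtain ⟨x₁, hx₁T, hx₁max⟩ := Set.exists_max_image T w hTfin ⟨x₀, Or.inr hx₀⟩
  set A : Set V := {x ∈ T | ∀ z ∈ T, w z ≤ w x} with hA
  obtain ⟨xs, hxsA, hxsmax⟩ :=
    Set.exists_max_image A d (Set.toFinite A) ⟨x₁, hx₁T, hx₁max⟩
  have hxsb : xs ∈ bdry adj K := by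
    rcases hxsA.1 with hK | hbd
    · exfalso
      have hne : x₀ ≠ xs := fun h => hx₀.1 (h ▸ hK)
      have hex : ∃ l, pathIn adj K x₀ xs l :=
        hconn x₀ (Or.inr hx₀) xs (Or.inl hK) hne
      obtain ⟨z, hzx, hz0K, hzd⟩ := dK_pred hδ hK hne hex
      have hzT : z ∈ T := by
        rcases hz0K with rfl | hzK
        · exact Or.inr hx₀
        · exact Or.inl hzK
      set S : Set ℝ := (fun y => u y - u xs) '' {y | adj xs y} with hS
      have hSfin : S.Finite := Set.toFinite S
      have hSne : S.Nonempty := ⟨u z - u xs, z, hsymm z xs hzx, rfl⟩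
      have hmin_le : sInf S ≤ u z - u xs :=
        csInf_le hSfin.bddBelow ⟨z, hsymm z xs hzx, rfl⟩
      have hwz : w z ≤ w xs := hxsA.2 z hzT
      have hz_le : u z - u xs ≤ lam * (d z - d xs) := by
        simp only [hw] at hwz; linarith
      have hdz : lam * (d z - d xs) ≤ -(lam * δ) := by nlinarith
      have hsum : sSup S + sInf S = 0 := hu xs hK
      have hmax_ge : lam * δ ≤ sSup S := by linarith
      obtain ⟨y, hyadj, hyeq⟩ := Set.Nonempty.csSup_mem hSne hSfin
      have hyadj' : adj xs y := hyadj
      have hyT : y ∈ T := by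
        by_cases hyK : y ∈ K
        · exact Or.inl hyK
        · exact Or.inr ⟨hyK, xs, hK, hyadj'⟩
      have hwy : w y ≤ w xs := hxsA.2 y hyT
      have h1 : u y - u xs ≤ lam * (d y - d xs) := by
        simp only [hw] at hwy; linarith
      have h2 : d y ≤ d xs + δ := dK_step hδ hK hne hex hyadj'
      have hyeq' : u y - u xs = sSup S := hyeq
      -- equalities
      have hk1 : lam * (d y - d xs) ≤ lam * δ := by nlinarith
      have heq1 : u y - u xs = lam * (d y - d xs) := by linarith
      have heq2 : d y = d xs + δ := by
        have hk2 : lam * δ ≤ lam * (d y - d xs) := by linarith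
        have := le_of_mul_le_mul_left hk2 hlam
        linarith
      have hwy_eq : w y = w xs := by
        simp only [hw]
        rw [heq2] at heq1 ⊢
        linarith
      have hyA : y ∈ A := ⟨hyT, fun z' hz' => (hxsA.2 z' hz').trans hwy_eq.ge⟩
      have := hxsmax y hyA
      rw [heq2] at this
      linarith
    · exact hbd
  intro x hx
  have h1 : w x ≤ w xs := hxsA.2 x (Or.inl hx)
  have hdxs : d xs = dK adj K δ x₀ xs := rfl
  have h2 : w xs ≤ 0 := by
    have := hb xs hxsb
    simp only [hw]
    rw [hdxs]
    linarith
  simp only [hw] at h1 h2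
  show u x ≤ α + lam * d x
  linarith

end lemmas

/-- Infinity harmonic functions satisfy comparison with cones. -/
theorem stmt9 [Fintype V] (adj : V → V → Prop) (hsymm : ∀ x y, adj x y → adj y x)
    (δ : ℝ) (hδ : 0 < δ) (K : Set V) (hconn : connectedIn adj K)
    (u : V → ℝ) (hu : ∀ x ∈ K, lapInf adj u x = 0) :
    ∀ x₀ ∈ bdry adj K, ∀ lam : ℝ, 0 ≤ lam → ∀ α : ℝ,
      ((∀ y ∈ bdry adj K, u y ≤ α + lam * dK adj K δ x₀ y) →
        ∀ x ∈ K, u x ≤ α + lam * dK adj K δ x₀ x) ∧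
      ((∀ y ∈ bdry adj K, α - lam * dK adj K δ x₀ y ≤ u y) →
        ∀ x ∈ K, α - lam * dK adj K δ x₀ x ≤ u x) := by
  intro x₀ hx₀ lam hlam α
  have upper0 : ∀ (v : V → ℝ), (∀ x ∈ K, lapInf adj v x = 0) → ∀ β : ℝ,
      (∀ y ∈ bdry adj K, v y ≤ β + lam * dK adj K δ x₀ y) →
      ∀ x ∈ K, v x ≤ β + lam * dK adj K δ x₀ x := by
    intro v hv β hbv x hx
    rcases hlam.lt_or_eq with hpos | heq
    · exact upper adj hsymm δ hδ K hconn v hv x₀ hx₀ lam hpos β hbv x hx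
    · subst heq
      have key : ∀ ε : ℝ, 0 < ε → v x ≤ β + ε * dK adj K δ x₀ x := by
        intro ε hε
        refine upper adj hsymm δ hδ K hconn v hv x₀ hx₀ ε hε β (fun y hy => ?_) x hx
        have h1 := hbv y hy
        have h0 := dK_nonneg (adj := adj) (K := K) (x := x₀) (y := y) hδ
        nlinarith
      have h0 := dK_nonneg (adj := adj) (K := K) (x := x₀) (y := x) hδ
      have hvb : v x ≤ β := by
        refine le_of_forall_pos_le_add fun ε hε => ?_
        have hk := key (ε / (dK adj K δ x₀ x + 1)) (by positivity)
        have hle : (ε / (dK adj K δ x₀ x + 1)) * dK adj K δ x₀ x ≤ ε := by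
          rw [div_mul_eq_mul_div, div_le_iff₀ (by linarith)]
          nlinarith
        linarith
      simpa using hvb
  constructor
  · intro hb x hx
    exact upper0 u hu α hb x hx
  · intro hb x hx
    have hv : ∀ x ∈ K, lapInf adj (fun y => -u y) x = 0 := by
      intro x hx
      rw [lapInf_neg, hu x hx, neg_zero]
    have := upper0 (fun y => -u y) hv (-α)
      (fun y hy => by have := hb y hy; linarith) x hx
    linarith
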